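/- arXiv:2603.24189 — 5 statements merged into one kernel-verified Lean document; each statement's English description precedes it below -/
import Mathlib

section
/- Let n ≥ 1, let ω : Fin n → ℝ with ω_j ≠ 0 for all j, let M = diag(ω), and let D, B be n×n real matrices such that M D + (M D)ᵀ = B and every row of D sums to zero. Then for every f : Fin n → ℝ^m and every j, ((M⁻¹ Dᵀ M) f)_j = ((M⁻¹ B) f)_j − ∑_k D_{jk} (f_j + f_k). In other words, the weak-form volume term is equivalent to the flux-differencing volume term −2 ∑_k D_{jk} · (1/2)(f_j + f_k) with the central two-point flux, up to the boundary correction M⁻¹ B f. -/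
open Matrix

open Finset

/-- For a diagonal mass matrix `M = diag ω` with nonzero weights, an SBP pair `(M*D, B)`
and a derivative matrix `D` whose rows sum to zero, the weak-form volume term
`(M⁻¹ Dᵀ M) f` equals the boundary contribution `(M⁻¹ B) f` minus the flux-differencing
volume term with the central two-point flux, nodewise. -/
theorem weak_form_eq_flux_differencing_central
    (n m : ℕ) (hn : 1 ≤ n) (ω : Fin n → ℝ) (hω : ∀ j, ω j ≠ 0)
    (D B : Matrix (Fin n) (Fin n) ℝ)
    (hSBP : Matrix.diagonal ω * D + (Matrix.diagonal ω * D)ᵀ = B)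
    (hD : ∀ j, ∑ k, D j k = 0) (f : Fin n → (Fin m → ℝ)) :
    ∀ j, (∑ k, ((Matrix.diagonal ω)⁻¹ * Dᵀ * Matrix.diagonal ω) j k • f k)
        = (∑ k, ((Matrix.diagonal ω)⁻¹ * B) j k • f k)
          - ∑ k, D j k • (f j + f k) := by
  intro j
  have hu : IsUnit ω := by
    refine isUnit_iff_exists.mpr ⟨fun i => (ω i)⁻¹, ?_, ?_⟩ <;>
      funext i <;> simp [mul_inv_cancel₀ (hω i), inv_mul_cancel₀ (hω i)]
  have hinv : (Matrix.diagonal ω)⁻¹ = Matrix.diagonal (fun i => (ω i)⁻¹) := by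
    rw [Matrix.inv_diagonal]
    obtain ⟨u, rfl⟩ := hu
    have key : (Ring.inverse (u : Fin n → ℝ)) = fun i => ((u : Fin n → ℝ) i)⁻¹ := by
      rw [Ring.inverse_unit]
      funext i
      have h3 : (u : Fin n → ℝ) i * ((u⁻¹ : (Fin n → ℝ)ˣ) : Fin n → ℝ) i = 1 := by
        simpa using congrFun u.mul_inv i
      exact (inv_eq_of_mul_eq_one_right h3).symm
    rw [key]
  subst hSBP
  funext x
  simp only [hinv, Matrix.mul_apply, Matrix.diagonal_apply, Matrix.transpose_apply,
    Matrix.add_apply, Finset.sum_apply, Pi.sub_apply, Pi.add_apply, Pi.smul_apply,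
    smul_eq_mul, ite_mul, mul_ite, zero_mul, mul_zero, Finset.sum_ite_eq,
    Finset.sum_ite_eq', Finset.mem_univ, if_true]
  rw [eq_sub_iff_add_eq, ← Finset.sum_add_distrib]
  have hz : ∑ k, D j k * f j x = 0 := by
    rw [← Finset.sum_mul, hD j, zero_mul]
  calc ∑ k, ((ω j)⁻¹ * D k j * ω k * f k x + D j k * (f j x + f k x))
      = ∑ k, ((ω j)⁻¹ * (ω j * D j k + ω k * D k j) * f k x + D j k * f j x) := by
        refine Finset.sum_congr rfl fun k _ => ?_
        rw [mul_add ((ω j)⁻¹), add_mul, ← mul_assoc ((ω j)⁻¹), inv_mul_cancel₀ (hω j), one_mul]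
        ring
    _ = ∑ k, (ω j)⁻¹ * (ω j * D j k + ω k * D k j) * f k x := by
        rw [Finset.sum_add_distrib, hz, add_zero]
end

section
/- Let p ≥ 1 and let Q be a (p+1)×(p+1) real matrix satisfying the SBP property Q + Qᵀ = B, where B is the boundary matrix, and whose rows sum to zero (Q applied to the all-ones vector is zero). Let u : Fin (p+1) → ℝ^m be nodal states, let w : ℝ^m → ℝ^m and ψ : ℝ^m → ℝ, and let F : ℝ^m × ℝ^m → ℝ^m be a symmetric two-point flux satisfying Tadmor's entropy-conservation condition ⟨w(a) − w(b), F(a,b)⟩ = ψ(a) − ψ(b) for all a, b ∈ ℝ^m. Then the entropy production of the flux-differencing volume term equals the surface difference of the entropy potential: −∑_{j=0}^{p} ∑_{k=0}^{p} (2Q − B)_{jk} ⟨w(u_j), F(u_j, u_k)⟩ = ψ(u_p) − ψ(u_0). -/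
open Matrix

open Finset
open scoped RealInnerProductSpace

/-- The boundary matrix of a nodal DG scheme on `p+1` nodes: diagonal with entries
`-1` at the first node, `1` at the last node, and `0` elsewhere. -/
def boundaryMatrix (p : ℕ) : Matrix (Fin (p + 1)) (Fin (p + 1)) ℝ :=
  Matrix.diagonal fun i => if i = 0 then (-1 : ℝ) else if i = Fin.last p then 1 else 0

/-- For an SBP operator `Q` (`Q + Qᵀ = B`) whose rows sum to zero and a symmetric
two-point flux `F` satisfying Tadmor's entropy-conservation condition, the entropy
production of the flux-differencing volume term equals the surface difference of the
entropy potential `ψ`. -/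
theorem flux_differencing_entropy_production
    (p m : ℕ) (hp : 1 ≤ p) (Q : Matrix (Fin (p + 1)) (Fin (p + 1)) ℝ)
    (hSBP : Q + Qᵀ = boundaryMatrix p) (hQ : ∀ j, ∑ k, Q j k = 0)
    (u : Fin (p + 1) → EuclideanSpace ℝ (Fin m))
    (w : EuclideanSpace ℝ (Fin m) → EuclideanSpace ℝ (Fin m))
    (ψ : EuclideanSpace ℝ (Fin m) → ℝ)
    (F : EuclideanSpace ℝ (Fin m) → EuclideanSpace ℝ (Fin m) → EuclideanSpace ℝ (Fin m))
    (hFsym : ∀ a b, F a b = F b a)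
    (hFEC : ∀ a b, ⟪w a - w b, F a b⟫ = ψ a - ψ b) :
    -∑ j, ∑ k, ((2 : ℝ) • Q - boundaryMatrix p) j k * ⟪w (u j), F (u j) (u k)⟫
      = ψ (u (Fin.last p)) - ψ (u 0) := by
  set B := boundaryMatrix p with hBdef
  set S := (2 : ℝ) • Q - B with hSdef
  -- antisymmetry of S
  have hBsym : ∀ j k : Fin (p + 1), B j k = B k j := by
    intro j k
    rcases eq_or_ne j k with h | h
    · rw [h]
    · simp [hBdef, boundaryMatrix, Matrix.diagonal_apply_ne _ h,
        Matrix.diagonal_apply_ne _ h.symm]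
  have hanti : ∀ j k, S j k = -S k j := by
    intro j k
    have h1 := congrFun (congrFun hSBP j) k
    have h2 := congrFun (congrFun hSBP k) j
    simp only [Matrix.add_apply, Matrix.transpose_apply] at h1 h2
    have hb := hBsym j k
    simp only [hSdef, Matrix.sub_apply, Matrix.smul_apply, smul_eq_mul]
    linarith
  -- row sums of S
  have hBrow : ∀ j, ∑ k, B j k = B j j := by
    intro j
    refine Finset.sum_eq_single j (fun k _ hk => ?_) (by simp)
    simp [hBdef, boundaryMatrix, Matrix.diagonal_apply_ne' _ hk]
  have hSrow : ∀ j, ∑ k, S j k = -(B j j) := by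
    intro j
    simp only [hSdef, Matrix.sub_apply, Matrix.smul_apply, smul_eq_mul,
      Finset.sum_sub_distrib, ← Finset.mul_sum, hQ j, hBrow j]
    ring
  set T := ∑ j, ∑ k, S j k * ⟪w (u j), F (u j) (u k)⟫ with hTdef
  have hswap : T = ∑ j, ∑ k, -(S j k) * ⟪w (u k), F (u j) (u k)⟫ := by
    rw [hTdef, Finset.sum_comm]
    refine Finset.sum_congr rfl fun j _ => Finset.sum_congr rfl fun k _ => ?_
    rw [hanti k j, hFsym (u k) (u j)]
  have h2T : 2 * T = ∑ j, ∑ k, S j k * (ψ (u j) - ψ (u k)) := by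
    have : 2 * T = T + T := by ring
    rw [this]
    nth_rewrite 2 [hswap]
    rw [hTdef, ← Finset.sum_add_distrib]
    refine Finset.sum_congr rfl fun j _ => ?_
    rw [← Finset.sum_add_distrib]
    refine Finset.sum_congr rfl fun k _ => ?_
    rw [← hFEC (u j) (u k), inner_sub_left]
    ring
  have hpsik : ∑ j, ∑ k, S j k * ψ (u k) = -∑ j, ∑ k, S j k * ψ (u j) := by
    rw [Finset.sum_comm, ← Finset.sum_neg_distrib]
    refine Finset.sum_congr rfl fun j _ => ?_
    rw [← Finset.sum_neg_distrib]
    refine Finset.sum_congr rfl fun k _ => ?_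
    rw [hanti k j]
    ring
  have h2T' : 2 * T = 2 * ∑ j, (∑ k, S j k) * ψ (u j) := by
    rw [h2T]
    have e1 : ∑ j, ∑ k, S j k * (ψ (u j) - ψ (u k))
        = (∑ j, ∑ k, S j k * ψ (u j)) - ∑ j, ∑ k, S j k * ψ (u k) := by
      simp [mul_sub, Finset.sum_sub_distrib]
    rw [e1, hpsik, sub_neg_eq_add, ← two_mul]
    congr 1
    exact Finset.sum_congr rfl fun j _ => by rw [← Finset.sum_mul]
  have hfinal : ∑ j, (∑ k, S j k) * ψ (u j) = ψ (u 0) - ψ (u (Fin.last p)) := by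
    have hne : (0 : Fin (p + 1)) ≠ Fin.last p := by
      intro h
      have := congrArg Fin.val h
      simp [Fin.last] at this
      omega
    have hsub : ∀ j ∈ (Finset.univ : Finset (Fin (p+1))) \ {0, Fin.last p},
        (∑ k, S j k) * ψ (u j) = 0 := by
      intro j hj
      simp only [Finset.mem_sdiff, Finset.mem_insert, Finset.mem_singleton] at hj
      push_neg at hj
      rw [hSrow j]
      simp [hBdef, boundaryMatrix, Matrix.diagonal_apply_eq, hj.2.1, hj.2.2]
    rw [← Finset.sum_subset (Finset.subset_univ ({0, Fin.last p} : Finset (Fin (p+1))))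
        (fun j _ hj => hsub j (by simp [hj]))]
    rw [Finset.sum_pair hne, hSrow, hSrow]
    simp [hBdef, boundaryMatrix, Matrix.diagonal_apply_eq, hne.symm]
    ring
  have : T = ψ (u 0) - ψ (u (Fin.last p)) := by
    have := h2T'.trans (by rw [hfinal])
    linarith
  rw [this]
  ring
end

section
/- Consider a one-dimensional periodic mesh of N ≥ 1 elements indexed by i ∈ ℤ/Nℤ, each with p+1 nodes (p ≥ 1). Let Q be a (p+1)×(p+1) real matrix with Q + Qᵀ = B (B the boundary matrix) and rows summing to zero. Let u_{i,j} ∈ ℝ^m be nodal states, w : ℝ^m → ℝ^m, ψ : ℝ^m → ℝ, let F be a symmetric two-point volume flux satisfying Tadmor's entropy-conservation condition, and let f* : ℝ^m × ℝ^m → ℝ^m be an interface flux that is also entropy-conservative, i.e. ⟨w(b) − w(a), f*(a,b)⟩ = ψ(b) − ψ(a) for all a, b. Define the nodal right-hand side r_{i,j} := s_{i,j} − ∑_k (2Q − B)_{jk} F(u_{i,j}, u_{i,k}), where s_{i,0} = f*(u_{i−1,p}, u_{i,0}), s_{i,p} = −f*(u_{i,p}, u_{i+1,0}), and s_{i,j}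 = 0 for 0 < j < p. Then the total entropy production vanishes: ∑_{i} ∑_{j} ⟨w(u_{i,j}), r_{i,j}⟩ = 0. -/
open Matrix

open Finset
open scoped RealInnerProductSpace

/-- On a periodic 1D mesh of `N` elements, the DG scheme with flux-differencing volume
terms built from an SBP operator `Q`, a symmetric entropy-conservative two-point volume
flux `F`, and an entropy-conservative interface flux `fstar` has vanishing total entropy
production. -/
theorem periodic_flux_differencing_entropy_conservation
    (N p m : ℕ) [NeZero N] (hp : 1 ≤ p)
    (Q : Matrix (Fin (p + 1)) (Fin (p + 1)) ℝ)
    (hSBP : Q + Qᵀ = boundaryMatrix p) (hQ : ∀ j, ∑ k, Q j k = 0)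
    (u : ZMod N → Fin (p + 1) → EuclideanSpace ℝ (Fin m))
    (w : EuclideanSpace ℝ (Fin m) → EuclideanSpace ℝ (Fin m))
    (ψ : EuclideanSpace ℝ (Fin m) → ℝ)
    (F : EuclideanSpace ℝ (Fin m) → EuclideanSpace ℝ (Fin m) → EuclideanSpace ℝ (Fin m))
    (fstar : EuclideanSpace ℝ (Fin m) → EuclideanSpace ℝ (Fin m) → EuclideanSpace ℝ (Fin m))
    (hFsym : ∀ a b, F a b = F b a)
    (hFEC : ∀ a b, ⟪w a - w b, F a b⟫ = ψ a - ψ b)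
    (hfstarEC : ∀ a b, ⟪w b - w a, fstar a b⟫ = ψ b - ψ a) :
    ∑ i : ZMod N, ∑ j : Fin (p + 1),
      ⟪w (u i j),
        (if j = 0 then fstar (u (i - 1) (Fin.last p)) (u i 0)
          else if j = Fin.last p then -fstar (u i (Fin.last p)) (u (i + 1) 0)
          else 0)
        - ∑ k, ((2 : ℝ) • Q - boundaryMatrix p) j k • F (u i j) (u i k)⟫ = 0 := by
  classical
  have h0last : (0 : Fin (p + 1)) ≠ Fin.last p := by
    intro h
    have := congrArg Fin.val h
    simp [Fin.last] at this
    omega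
  set B := boundaryMatrix p with hBdef
  set D : Matrix (Fin (p + 1)) (Fin (p + 1)) ℝ := (2 : ℝ) • Q - B with hDdef
  have hBd : ∀ j k : Fin (p + 1), j ≠ k → B j k = 0 := by
    intro j k h
    exact Matrix.diagonal_apply_ne _ h
  have hBsym : ∀ j k, B j k = B k j := by
    intro j k
    by_cases h : j = k
    · rw [h]
    · rw [hBd j k h, hBd k j (Ne.symm h)]
  have hB0 : B 0 0 = -1 := by simp [hBdef, boundaryMatrix]
  have hBl : B (Fin.last p) (Fin.last p) = 1 := by
    simp [hBdef, boundaryMatrix, Matrix.diagonal_apply, Ne.symm h0last]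
  have hBjj : ∀ j, j ≠ 0 → j ≠ Fin.last p → B j j = 0 := by
    intro j h1 h2
    simp [hBdef, boundaryMatrix, Matrix.diagonal_apply, h1, h2]
  have hQE : ∀ j k, Q j k + Q k j = B j k := by
    intro j k
    have := congrFun (congrFun hSBP j) k
    simpa [Matrix.add_apply, Matrix.transpose_apply] using this
  have hDanti : ∀ j k, D k j = - D j k := by
    intro j k
    have h1 := hQE j k
    have h2 := hBsym j k
    simp only [hDdef, Matrix.sub_apply, Matrix.smul_apply, smul_eq_mul]
    linarith
  have hDrow : ∀ j, ∑ k, D j k = - B j j := by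
    intro j
    have hBr : ∑ k, B j k = B j j := by
      rw [Finset.sum_eq_single j]
      · intro k _ hk
        exact hBd j k (Ne.symm hk)
      · simp
    simp only [hDdef, Matrix.sub_apply, Matrix.smul_apply, smul_eq_mul,
      Finset.sum_sub_distrib, ← Finset.mul_sum, hQ j, hBr]
    ring
  have hDcol : ∀ k, ∑ j, D j k = B k k := by
    intro k
    have : ∑ j, D j k = ∑ j, - D k j := by
      refine Finset.sum_congr rfl fun j _ => ?_
      rw [← hDanti k j]
    rw [this, Finset.sum_neg_distrib, hDrow k, neg_neg]
  -- the per-element volume contribution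
  have keyvol : ∀ i, ∑ j, ∑ k, D j k * ⟪w (u i j), F (u i j) (u i k)⟫
      = ψ (u i 0) - ψ (u i (Fin.last p)) := by
    intro i
    set S := ∑ j, ∑ k, D j k * ⟪w (u i j), F (u i j) (u i k)⟫ with hS
    have hswap : S = ∑ j, ∑ k, - (D j k * ⟪w (u i k), F (u i j) (u i k)⟫) := by
      rw [hS, Finset.sum_comm]
      refine Finset.sum_congr rfl fun j _ => Finset.sum_congr rfl fun k _ => ?_
      rw [hDanti j k, hFsym (u i k) (u i j)]
      ring
    have h2S : 2 * S = ∑ j, ∑ k, D j k * (ψ (u i j) - ψ (u i k)) := by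
      calc 2 * S = S + S := by ring
        _ = ∑ j, ∑ k, (D j k * ⟪w (u i j), F (u i j) (u i k)⟫
              + - (D j k * ⟪w (u i k), F (u i j) (u i k)⟫)) := by
            nth_rewrite 2 [hswap]; rw [hS]
            rw [← Finset.sum_add_distrib]
            refine Finset.sum_congr rfl fun j _ => ?_
            rw [← Finset.sum_add_distrib]
        _ = ∑ j, ∑ k, D j k * (ψ (u i j) - ψ (u i k)) := by
            refine Finset.sum_congr rfl fun j _ => Finset.sum_congr rfl fun k _ => ?_
            rw [← hFEC (u i j) (u i k), inner_sub_left]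
            ring
    have hBψ : ∑ j, B j j * ψ (u i j)
        = ψ (u i (Fin.last p)) - ψ (u i 0) := by
      have hterm : ∀ j, B j j * ψ (u i j)
          = (if j = 0 then -ψ (u i 0) else 0)
            + (if j = Fin.last p then ψ (u i (Fin.last p)) else 0) := by
        intro j
        by_cases h1 : j = 0
        · subst h1
          rw [hB0]
          simp [h0last]
        · by_cases h2 : j = Fin.last p
          · subst h2
            rw [hBl]
            simp [h1]
          · rw [hBjj j h1 h2]
            simp [h1, h2]
      rw [Finset.sum_congr rfl fun j _ => hterm j, Finset.sum_add_distrib]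
      simp
      ring
    have hsplit : ∑ j, ∑ k, D j k * (ψ (u i j) - ψ (u i k))
        = -2 * ∑ j, B j j * ψ (u i j) := by
      have h1 : ∑ j, ∑ k, D j k * ψ (u i j) = ∑ j, (- B j j) * ψ (u i j) := by
        refine Finset.sum_congr rfl fun j _ => ?_
        rw [← Finset.sum_mul, hDrow j]
      have h2 : ∑ j, ∑ k, D j k * ψ (u i k) = ∑ k, B k k * ψ (u i k) := by
        rw [Finset.sum_comm]
        refine Finset.sum_congr rfl fun k _ => ?_
        rw [← Finset.sum_mul, hDcol k]
      calc ∑ j, ∑ k, D j k * (ψ (u i j) - ψ (u i k))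
          = ∑ j, ∑ k, (D j k * ψ (u i j) - D j k * ψ (u i k)) := by
            refine Finset.sum_congr rfl fun j _ => Finset.sum_congr rfl fun k _ => ?_
            ring
        _ = (∑ j, ∑ k, D j k * ψ (u i j)) - ∑ j, ∑ k, D j k * ψ (u i k) := by
            rw [← Finset.sum_sub_distrib]
            refine Finset.sum_congr rfl fun j _ => ?_
            rw [← Finset.sum_sub_distrib]
        _ = (∑ j, (- B j j) * ψ (u i j)) - ∑ k, B k k * ψ (u i k) := by
            rw [h1, h2]
        _ = -2 * ∑ j, B j j * ψ (u i j) := by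
            rw [Finset.mul_sum]
            rw [← Finset.sum_sub_distrib]
            refine Finset.sum_congr rfl fun j _ => ?_
            ring
    have : 2 * S = -2 * (ψ (u i (Fin.last p)) - ψ (u i 0)) := by
      rw [h2S, hsplit, hBψ]
    linarith
  -- the per-element boundary contribution
  have keybdy : ∀ i : ZMod N, ∑ j, ⟪w (u i j),
        (if j = 0 then fstar (u (i - 1) (Fin.last p)) (u i 0)
          else if j = Fin.last p then -fstar (u i (Fin.last p)) (u (i + 1) 0)
          else 0)⟫
      = ⟪w (u i 0), fstar (u (i - 1) (Fin.last p)) (u i 0)⟫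
        - ⟪w (u i (Fin.last p)), fstar (u i (Fin.last p)) (u (i + 1) 0)⟫ := by
    intro i
    have hterm : ∀ j, ⟪w (u i j),
        (if j = 0 then fstar (u (i - 1) (Fin.last p)) (u i 0)
          else if j = Fin.last p then -fstar (u i (Fin.last p)) (u (i + 1) 0)
          else 0)⟫
        = (if j = 0 then ⟪w (u i 0), fstar (u (i - 1) (Fin.last p)) (u i 0)⟫ else 0)
          + (if j = Fin.last p
              then -⟪w (u i (Fin.last p)), fstar (u i (Fin.last p)) (u (i + 1) 0)⟫ else 0) := by
      intro j
      by_cases h1 : j = 0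
      · subst h1
        simp [h0last]
      · by_cases h2 : j = Fin.last p
        · subst h2
          simp [h1, inner_neg_right]
        · simp [h1, h2]
    rw [Finset.sum_congr rfl fun j _ => hterm j, Finset.sum_add_distrib]
    simp
    ring
  -- rewrite the goal
  have hgoal : ∑ i : ZMod N, ∑ j : Fin (p + 1),
      ⟪w (u i j),
        (if j = 0 then fstar (u (i - 1) (Fin.last p)) (u i 0)
          else if j = Fin.last p then -fstar (u i (Fin.last p)) (u (i + 1) 0)
          else 0)
        - ∑ k, D j k • F (u i j) (u i k)⟫
      = ∑ i : ZMod N,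
          ((⟪w (u i 0), fstar (u (i - 1) (Fin.last p)) (u i 0)⟫
            - ⟪w (u i (Fin.last p)), fstar (u i (Fin.last p)) (u (i + 1) 0)⟫)
           - (ψ (u i 0) - ψ (u i (Fin.last p)))) := by
    refine Finset.sum_congr rfl fun i _ => ?_
    rw [← keybdy i, ← keyvol i, ← Finset.sum_sub_distrib]
    refine Finset.sum_congr rfl fun j _ => ?_
    rw [inner_sub_right, inner_sum]
    congr 1
    refine Finset.sum_congr rfl fun k _ => ?_
    rw [real_inner_smul_right]
  rw [hgoal]
  -- telescoping over the periodic mesh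
  have hshiftC : ∑ i : ZMod N, ⟪w (u i (Fin.last p)), fstar (u i (Fin.last p)) (u (i + 1) 0)⟫
      = ∑ i : ZMod N, ⟪w (u (i - 1) (Fin.last p)),
          fstar (u (i - 1) (Fin.last p)) (u i 0)⟫ := by
    rw [← Equiv.sum_comp (Equiv.subRight (1 : ZMod N))
      (fun i => ⟪w (u i (Fin.last p)), fstar (u i (Fin.last p)) (u (i + 1) 0)⟫)]
    refine Finset.sum_congr rfl fun i _ => ?_
    simp [Equiv.subRight, sub_add_cancel]
  have hshiftψ : ∑ i : ZMod N, ψ (u i (Fin.last p))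
      = ∑ i : ZMod N, ψ (u (i - 1) (Fin.last p)) := by
    rw [← Equiv.sum_comp (Equiv.subRight (1 : ZMod N))
      (fun i => ψ (u i (Fin.last p)))]
    simp [Equiv.subRight]
  have hEC : ∀ i : ZMod N,
      ⟪w (u i 0), fstar (u (i - 1) (Fin.last p)) (u i 0)⟫
        - ⟪w (u (i - 1) (Fin.last p)), fstar (u (i - 1) (Fin.last p)) (u i 0)⟫
      = ψ (u i 0) - ψ (u (i - 1) (Fin.last p)) := by
    intro i
    rw [← hfstarEC (u (i - 1) (Fin.last p)) (u i 0), inner_sub_left]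
  calc ∑ i : ZMod N,
          ((⟪w (u i 0), fstar (u (i - 1) (Fin.last p)) (u i 0)⟫
            - ⟪w (u i (Fin.last p)), fstar (u i (Fin.last p)) (u (i + 1) 0)⟫)
           - (ψ (u i 0) - ψ (u i (Fin.last p))))
      = (∑ i : ZMod N, ⟪w (u i 0), fstar (u (i - 1) (Fin.last p)) (u i 0)⟫)
        - (∑ i : ZMod N, ⟪w (u i (Fin.last p)), fstar (u i (Fin.last p)) (u (i + 1) 0)⟫)
        - ((∑ i : ZMod N, ψ (u i 0)) - ∑ i : ZMod N, ψ (u i (Fin.last p))) := by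
        rw [← Finset.sum_sub_distrib, ← Finset.sum_sub_distrib, ← Finset.sum_sub_distrib]
    _ = (∑ i : ZMod N, (⟪w (u i 0), fstar (u (i - 1) (Fin.last p)) (u i 0)⟫
            - ⟪w (u (i - 1) (Fin.last p)), fstar (u (i - 1) (Fin.last p)) (u i 0)⟫))
        - ((∑ i : ZMod N, ψ (u i 0)) - ∑ i : ZMod N, ψ (u i (Fin.last p))) := by
        rw [hshiftC, ← Finset.sum_sub_distrib]
    _ = (∑ i : ZMod N, (ψ (u i 0) - ψ (u (i - 1) (Fin.last p))))
        - ((∑ i : ZMod N, ψ (u i 0)) - ∑ i : ZMod N, ψ (u i (Fin.last p))) := by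
        rw [Finset.sum_congr rfl fun i _ => hEC i]
    _ = 0 := by
        rw [Finset.sum_sub_distrib, ← hshiftψ]
        ring
end

section
/- Consider a one-dimensional periodic mesh of N ≥ 1 elements indexed by i ∈ ℤ/Nℤ, each with p+1 nodes (p ≥ 1). Let Q be a (p+1)×(p+1) real matrix with Q + Qᵀ = B (B the boundary matrix) and rows summing to zero. Let u_{i,j} ∈ ℝ^m be nodal states, w : ℝ^m → ℝ^m, ψ : ℝ^m → ℝ, let F be a symmetric two-point volume flux satisfying Tadmor's entropy-conservation condition, and let f* : ℝ^m × ℝ^m → ℝ^m be an entropy-stable interface flux, i.e. ⟨w(b) − w(a), f*(a,b)⟩ ≤ ψ(b) − ψ(a) for all a, b. Define r_{i,j} := s_{i,j} − ∑_k (2Q − B)_{jk} F(u_{i,j}, u_{i,k}), where s_{i,0} = f*(u_{i−1,p}, u_{i,0}), s_{i,p} = −f*(u_{i,p}, u_{i+1,0}), and s_{i,j} = 0 for 0 < j < p. Then the total entropy production is nonpositive: ∑_{i} ∑_{j} ⟨w(u_{i,j}), r_{i,j}⟩ ≤ 0. -/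
open Matrix

open Finset
open scoped RealInnerProductSpace

private lemma sum_if_two {p : ℕ} (h0 : (0 : Fin (p + 1)) ≠ Fin.last p) (a b : ℝ) :
    ∑ j : Fin (p + 1), (if j = 0 then a else if j = Fin.last p then b else 0) = a + b := by
  have h : ∀ j : Fin (p + 1), (if j = 0 then a else if j = Fin.last p then b else 0)
      = (if j = 0 then a else 0) + (if j = Fin.last p then b else 0) := by
    intro j
    rcases eq_or_ne j 0 with rfl | hj
    · simp [h0]
    · simp [hj]
  rw [Finset.sum_congr rfl fun j _ => h j, Finset.sum_add_distrib]
  simp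

/-- On a periodic 1D mesh of `N` elements, the DG scheme with flux-differencing volume
terms built from an SBP operator `Q`, a symmetric entropy-conservative two-point volume
flux `F`, and an entropy-stable interface flux `fstar` has nonpositive total entropy
production. -/
theorem periodic_flux_differencing_entropy_stability
    (N p m : ℕ) [NeZero N] (hp : 1 ≤ p)
    (Q : Matrix (Fin (p + 1)) (Fin (p + 1)) ℝ)
    (hSBP : Q + Qᵀ = boundaryMatrix p) (hQ : ∀ j, ∑ k, Q j k = 0)
    (u : ZMod N → Fin (p + 1) → EuclideanSpace ℝ (Fin m))
    (w : EuclideanSpace ℝ (Fin m) → EuclideanSpace ℝ (Fin m))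
    (ψ : EuclideanSpace ℝ (Fin m) → ℝ)
    (F : EuclideanSpace ℝ (Fin m) → EuclideanSpace ℝ (Fin m) → EuclideanSpace ℝ (Fin m))
    (fstar : EuclideanSpace ℝ (Fin m) → EuclideanSpace ℝ (Fin m) → EuclideanSpace ℝ (Fin m))
    (hFsym : ∀ a b, F a b = F b a)
    (hFEC : ∀ a b, ⟪w a - w b, F a b⟫ = ψ a - ψ b)
    (hfstarES : ∀ a b, ⟪w b - w a, fstar a b⟫ ≤ ψ b - ψ a) :
    ∑ i : ZMod N, ∑ j : Fin (p + 1),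
      ⟪w (u i j),
        (if j = 0 then fstar (u (i - 1) (Fin.last p)) (u i 0)
          else if j = Fin.last p then -fstar (u i (Fin.last p)) (u (i + 1) 0)
          else 0)
        - ∑ k, ((2 : ℝ) • Q - boundaryMatrix p) j k • F (u i j) (u i k)⟫ ≤ 0 := by
  classical
  have h0 : (0 : Fin (p + 1)) ≠ Fin.last p := by
    simp only [ne_eq, Fin.ext_iff, Fin.val_zero, Fin.val_last]
    omega
  -- entrywise identity for the volume matrix
  have entry : ∀ j k, ((2 : ℝ) • Q - boundaryMatrix p) j k = Q j k - Q k j := by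
    intro j k
    have h := congrFun (congrFun hSBP j) k
    simp only [Matrix.add_apply, Matrix.transpose_apply] at h
    simp only [Matrix.sub_apply, Matrix.smul_apply, smul_eq_mul]
    linarith
  -- column sums of Q
  have hcol : ∀ k : Fin (p + 1), ∑ j, Q j k
      = (if k = 0 then (-1 : ℝ) else if k = Fin.last p then 1 else 0) := by
    intro k
    have h : ∀ j, Q j k = boundaryMatrix p j k - Q k j := by
      intro j
      have h := congrFun (congrFun hSBP j) k
      simp only [Matrix.add_apply, Matrix.transpose_apply] at h
      linarith
    calc ∑ j, Q j k = ∑ j, (boundaryMatrix p j k - Q k j) :=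
          Finset.sum_congr rfl fun j _ => h j
      _ = ∑ j, boundaryMatrix p j k - ∑ j, Q k j := Finset.sum_sub_distrib _ _
      _ = _ := by
          rw [hQ k, sub_zero]
          simp [boundaryMatrix, Matrix.diagonal_apply]
  -- volume identity per element
  have vol : ∀ i : ZMod N,
      ∑ j, ∑ k, (Q j k - Q k j) * ⟪w (u i j), F (u i j) (u i k)⟫
        = ψ (u i 0) - ψ (u i (Fin.last p)) := by
    intro i
    have swap : ∑ j, ∑ k, Q k j * ⟪w (u i j), F (u i j) (u i k)⟫
        = ∑ j, ∑ k, Q j k * ⟪w (u i k), F (u i j) (u i k)⟫ := by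
      rw [Finset.sum_comm]
      refine Finset.sum_congr rfl fun j _ => Finset.sum_congr rfl fun k _ => ?_
      rw [hFsym]
    have step1 : ∑ j, ∑ k, (Q j k - Q k j) * ⟪w (u i j), F (u i j) (u i k)⟫
        = ∑ j, ∑ k, Q j k * (ψ (u i j) - ψ (u i k)) := by
      calc ∑ j, ∑ k, (Q j k - Q k j) * ⟪w (u i j), F (u i j) (u i k)⟫
          = ∑ j, ∑ k, (Q j k * ⟪w (u i j), F (u i j) (u i k)⟫
              - Q k j * ⟪w (u i j), F (u i j) (u i k)⟫) := by
            refine Finset.sum_congr rfl fun j _ => Finset.sum_congr rfl fun k _ => ?_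
            ring
        _ = ∑ j, ∑ k, Q j k * ⟪w (u i j), F (u i j) (u i k)⟫
            - ∑ j, ∑ k, Q k j * ⟪w (u i j), F (u i j) (u i k)⟫ := by
            simp [Finset.sum_sub_distrib]
        _ = ∑ j, ∑ k, (Q j k * ⟪w (u i j), F (u i j) (u i k)⟫
            - Q j k * ⟪w (u i k), F (u i j) (u i k)⟫) := by
            rw [swap]
            simp [Finset.sum_sub_distrib]
        _ = ∑ j, ∑ k, Q j k * (ψ (u i j) - ψ (u i k)) := by
            refine Finset.sum_congr rfl fun j _ => Finset.sum_congr rfl fun k _ => ?_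
            rw [← mul_sub, ← inner_sub_left, hFEC]
    rw [step1]
    have step2 : ∑ j, ∑ k, Q j k * (ψ (u i j) - ψ (u i k))
        = ∑ j, (∑ k, Q j k) * ψ (u i j) - ∑ k, (∑ j, Q j k) * ψ (u i k) := by
      calc ∑ j, ∑ k, Q j k * (ψ (u i j) - ψ (u i k))
          = ∑ j, ((∑ k, Q j k) * ψ (u i j) - ∑ k, Q j k * ψ (u i k)) := by
            refine Finset.sum_congr rfl fun j _ => ?_
            simp [mul_sub, Finset.sum_sub_distrib, Finset.sum_mul]
        _ = ∑ j, (∑ k, Q j k) * ψ (u i j) - ∑ j, ∑ k, Q j k * ψ (u i k) :=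
            Finset.sum_sub_distrib _ _
        _ = _ := by
            rw [Finset.sum_comm (f := fun j k => Q j k * ψ (u i k))]
            congr 1
            refine Finset.sum_congr rfl fun k _ => ?_
            rw [Finset.sum_mul]
    rw [step2]
    have hz : ∑ j, (∑ k, Q j k) * ψ (u i j) = 0 := by
      refine Finset.sum_eq_zero fun j _ => by rw [hQ j, zero_mul]
    rw [hz, zero_sub]
    have : ∑ k, (∑ j, Q j k) * ψ (u i k)
        = ∑ k : Fin (p + 1), (if k = 0 then -ψ (u i 0)
            else if k = Fin.last p then ψ (u i (Fin.last p)) else 0) := by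
      refine Finset.sum_congr rfl fun k _ => ?_
      rw [hcol k]
      rcases eq_or_ne k 0 with rfl | h1
      · simp
      · rcases eq_or_ne k (Fin.last p) with rfl | h2
        · simp [h1]
        · simp [h1, h2]
    rw [this, sum_if_two h0]
    ring
  -- surface identity per element
  have surf : ∀ i : ZMod N,
      ∑ j : Fin (p + 1), ⟪w (u i j),
          (if j = 0 then fstar (u (i - 1) (Fin.last p)) (u i 0)
            else if j = Fin.last p then -fstar (u i (Fin.last p)) (u (i + 1) 0)
            else 0)⟫
        = ⟪w (u i 0), fstar (u (i - 1) (Fin.last p)) (u i 0)⟫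
          - ⟪w (u i (Fin.last p)), fstar (u i (Fin.last p)) (u (i + 1) 0)⟫ := by
    intro i
    have h : ∀ j : Fin (p + 1), ⟪w (u i j),
        (if j = 0 then fstar (u (i - 1) (Fin.last p)) (u i 0)
          else if j = Fin.last p then -fstar (u i (Fin.last p)) (u (i + 1) 0)
          else 0)⟫
        = (if j = 0 then ⟪w (u i 0), fstar (u (i - 1) (Fin.last p)) (u i 0)⟫
           else if j = Fin.last p then
             -⟪w (u i (Fin.last p)), fstar (u i (Fin.last p)) (u (i + 1) 0)⟫
           else 0) := by
      intro j
      rcases eq_or_ne j 0 with rfl | h1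
      · simp
      · rcases eq_or_ne j (Fin.last p) with rfl | h2
        · simp [h1, inner_neg_right]
        · simp [h1, h2]
    rw [Finset.sum_congr rfl fun j _ => h j, sum_if_two h0]
    ring
  -- split each inner product
  have split : ∀ (i : ZMod N) (j : Fin (p + 1)),
      ⟪w (u i j),
        (if j = 0 then fstar (u (i - 1) (Fin.last p)) (u i 0)
          else if j = Fin.last p then -fstar (u i (Fin.last p)) (u (i + 1) 0)
          else 0)
        - ∑ k, ((2 : ℝ) • Q - boundaryMatrix p) j k • F (u i j) (u i k)⟫
      = ⟪w (u i j),
        (if j = 0 then fstar (u (i - 1) (Fin.last p)) (u i 0)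
          else if j = Fin.last p then -fstar (u i (Fin.last p)) (u (i + 1) 0)
          else 0)⟫
        - ∑ k, (Q j k - Q k j) * ⟪w (u i j), F (u i j) (u i k)⟫ := by
    intro i j
    rw [inner_sub_right, inner_sum]
    congr 1
    refine Finset.sum_congr rfl fun k _ => ?_
    rw [real_inner_smul_right, entry]
  have total : ∑ i : ZMod N, ∑ j : Fin (p + 1),
      ⟪w (u i j),
        (if j = 0 then fstar (u (i - 1) (Fin.last p)) (u i 0)
          else if j = Fin.last p then -fstar (u i (Fin.last p)) (u (i + 1) 0)
          else 0)
        - ∑ k, ((2 : ℝ) • Q - boundaryMatrix p) j k • F (u i j) (u i k)⟫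
      = ∑ i : ZMod N,
          ((⟪w (u i 0), fstar (u (i - 1) (Fin.last p)) (u i 0)⟫
            - ⟪w (u i (Fin.last p)), fstar (u i (Fin.last p)) (u (i + 1) 0)⟫)
          - (ψ (u i 0) - ψ (u i (Fin.last p)))) := by
    refine Finset.sum_congr rfl fun i _ => ?_
    rw [Finset.sum_congr rfl fun j _ => split i j, Finset.sum_sub_distrib, surf i, vol i]
  rw [total]
  -- reindex the incoming interface contribution
  have reidx : ∑ i : ZMod N, ⟪w (u i 0), fstar (u (i - 1) (Fin.last p)) (u i 0)⟫
      = ∑ i : ZMod N, ⟪w (u (i + 1) 0), fstar (u i (Fin.last p)) (u (i + 1) 0)⟫ := by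
    refine (Fintype.sum_equiv (Equiv.addRight (1 : ZMod N)) _ _ fun i => ?_).symm
    simp
  have reidx2 : ∑ i : ZMod N, ψ (u i 0) = ∑ i : ZMod N, ψ (u (i + 1) 0) :=
    (Fintype.sum_equiv (Equiv.addRight (1 : ZMod N))
      (fun i => ψ (u (i + 1) 0)) (fun i => ψ (u i 0)) fun i => rfl).symm
  have key : ∑ i : ZMod N,
      ((⟪w (u i 0), fstar (u (i - 1) (Fin.last p)) (u i 0)⟫
        - ⟪w (u i (Fin.last p)), fstar (u i (Fin.last p)) (u (i + 1) 0)⟫)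
      - (ψ (u i 0) - ψ (u i (Fin.last p))))
      ≤ ∑ i : ZMod N,
        ((ψ (u (i + 1) 0) - ψ (u i (Fin.last p)))
          - (ψ (u i 0) - ψ (u i (Fin.last p)))) := by
    rw [Finset.sum_sub_distrib, Finset.sum_sub_distrib (f := fun i => ψ (u (i+1) 0) - ψ (u i (Fin.last p)))]
    gcongr ?_ - ?_
    · rw [Finset.sum_sub_distrib, reidx, ← Finset.sum_sub_distrib]
      refine Finset.sum_le_sum fun i _ => ?_
      have := hfstarES (u i (Fin.last p)) (u (i + 1) 0)
      rwa [inner_sub_left] at this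
  refine key.trans (le_of_eq ?_)
  rw [Finset.sum_sub_distrib, Finset.sum_sub_distrib, Finset.sum_sub_distrib, ← reidx2]
  ring
end

section
/- Consider a one-dimensional periodic mesh of N ≥ 1 elements indexed by i ∈ ℤ/Nℤ, each with p+1 nodes (p ≥ 1). Let u_{i,j} ∈ ℝ^m be nodal states, w : ℝ^m → ℝ^m, ψ : ℝ^m → ℝ, and let f* : ℝ^m × ℝ^m → ℝ^m be an entropy-stable interface flux, i.e. ⟨w(b) − w(a), f*(a,b)⟩ ≤ ψ(b) − ψ(a) for all a, b. For each element i let V_{i} : Fin (p+1) → ℝ^m be ANY volume-term contribution satisfying the cell entropy inequality ∑_{j} ⟨w(u_{i,j}), V_{i,j}⟩ ≤ ψ(u_{i,p}) − ψ(u_{i,0}). Define r_{i,j} := s_{i,j} + V_{i,j}, where s_{i,0} = f*(u_{i−1,p}, u_{i,0}), s_{i,p} = −f*(u_{i,p}, u_{i+1,0}), and s_{i,j} = 0 for 0 < j < p. Then the total entropy production is nonpositive: ∑_{i} ∑_{j} ⟨w(u_{i,j}), r_{i,j}⟩ ≤ 0. In particular, the v-adaptive scheme in which each element uses either the entropy-conservative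 flux-differencing volume term or the weak-form volume term whenever the latter produces less entropy is globally entropy-stable. -/
open Finset
open scoped RealInnerProductSpace

/-- On a periodic 1D mesh of `N` elements, any DG scheme whose volume-term contributions
`V i` satisfy the cell entropy inequality on every element, combined with an
entropy-stable interface flux `fstar`, has nonpositive total entropy production.
In particular, the v-adaptive scheme (selecting per element the entropy-conservative
flux-differencing volume term, or the weak-form volume term whenever it produces less
entropy) is globally entropy-stable. -/
theorem periodic_cell_entropy_inequality_entropy_stability
    (N p m : ℕ) [NeZero N] (hp : 1 ≤ p)
    (u : ZMod N → Fin (p + 1) → EuclideanSpace ℝ (Fin m))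
    (w : EuclideanSpace ℝ (Fin m) → EuclideanSpace ℝ (Fin m))
    (ψ : EuclideanSpace ℝ (Fin m) → ℝ)
    (fstar : EuclideanSpace ℝ (Fin m) → EuclideanSpace ℝ (Fin m) → EuclideanSpace ℝ (Fin m))
    (hfstarES : ∀ a b, ⟪w b - w a, fstar a b⟫ ≤ ψ b - ψ a)
    (V : ZMod N → Fin (p + 1) → EuclideanSpace ℝ (Fin m))
    (hV : ∀ i, ∑ j, ⟪w (u i j), V i j⟫ ≤ ψ (u i (Fin.last p)) - ψ (u i 0)) :
    ∑ i : ZMod N, ∑ j : Fin (p + 1),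
      ⟪w (u i j),
        (if j = 0 then fstar (u (i - 1) (Fin.last p)) (u i 0)
          else if j = Fin.last p then -fstar (u i (Fin.last p)) (u (i + 1) 0)
          else 0)
        + V i j⟫ ≤ 0 := by
  have hp0 : p ≠ 0 := by omega
  have hne : (Fin.last p) ≠ (0 : Fin (p + 1)) := by
    intro h
    have := congrArg Fin.val h
    simp [Fin.last] at this
    exact hp0 this
  set F : ZMod N → EuclideanSpace ℝ (Fin m) :=
    fun i => fstar (u (i - 1) (Fin.last p)) (u i 0) with hF
  have hF1 : ∀ i : ZMod N, F (i + 1) = fstar (u i (Fin.last p)) (u (i + 1) 0) := by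
    intro i; simp [hF, add_sub_cancel_right]
  have hsum : ∀ i : ZMod N,
      ∑ j : Fin (p + 1),
        ⟪w (u i j),
          (if j = 0 then fstar (u (i - 1) (Fin.last p)) (u i 0)
            else if j = Fin.last p then -fstar (u i (Fin.last p)) (u (i + 1) 0)
            else 0) + V i j⟫
      = (⟪w (u i 0), F i⟫ - ⟪w (u i (Fin.last p)), F (i + 1)⟫)
        + ∑ j, ⟪w (u i j), V i j⟫ := by
    intro i
    simp only [inner_add_right]
    rw [Finset.sum_add_distrib]
    congr 1
    have key : ∀ j : Fin (p + 1),
        ⟪w (u i j),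
          (if j = 0 then fstar (u (i - 1) (Fin.last p)) (u i 0)
            else if j = Fin.last p then -fstar (u i (Fin.last p)) (u (i + 1) 0)
            else 0)⟫
        = (if j = 0 then ⟪w (u i 0), F i⟫ else 0)
          + (if j = Fin.last p then -⟪w (u i (Fin.last p)), F (i + 1)⟫ else 0) := by
      intro j
      by_cases h0 : j = 0
      · subst h0
        simp [hne, hF, hp0]
      · by_cases hl : j = Fin.last p
        · subst hl
          simp [h0, hF1, inner_neg_right]
        · simp [h0, hl]
    rw [Finset.sum_congr rfl (fun j _ => key j), Finset.sum_add_distrib]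
    simp [sub_eq_add_neg]
  calc ∑ i : ZMod N, ∑ j : Fin (p + 1),
        ⟪w (u i j),
          (if j = 0 then fstar (u (i - 1) (Fin.last p)) (u i 0)
            else if j = Fin.last p then -fstar (u i (Fin.last p)) (u (i + 1) 0)
            else 0) + V i j⟫
      = ∑ i : ZMod N, ((⟪w (u i 0), F i⟫ - ⟪w (u i (Fin.last p)), F (i + 1)⟫)
          + ∑ j, ⟪w (u i j), V i j⟫) := Finset.sum_congr rfl (fun i _ => hsum i)
    _ = ∑ i : ZMod N, (⟪w (u i 0), F i⟫ - ⟪w (u (i - 1) (Fin.last p)), F i⟫)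
          + ∑ i : ZMod N, ∑ j, ⟪w (u i j), V i j⟫ := by
        have : ∑ i : ZMod N, ⟪w (u i (Fin.last p)), F (i + 1)⟫
            = ∑ i : ZMod N, ⟪w (u (i - 1) (Fin.last p)), F i⟫ := by
          apply Fintype.sum_equiv (Equiv.addRight (1 : ZMod N))
          intro i
          simp [add_sub_cancel_right]
        rw [Finset.sum_add_distrib, Finset.sum_sub_distrib, this, ← Finset.sum_sub_distrib]
    _ ≤ ∑ i : ZMod N, (ψ (u i 0) - ψ (u (i - 1) (Fin.last p)))
          + ∑ i : ZMod N, (ψ (u i (Fin.last p)) - ψ (u i 0)) := by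
        apply add_le_add
        · apply Finset.sum_le_sum
          intro i _
          have := hfstarES (u (i - 1) (Fin.last p)) (u i 0)
          rw [inner_sub_left] at this
          linarith
        · exact Finset.sum_le_sum fun i _ => hV i
    _ = 0 := by
        rw [← Finset.sum_add_distrib]
        have : ∀ i : ZMod N,
            ψ (u i 0) - ψ (u (i - 1) (Fin.last p)) + (ψ (u i (Fin.last p)) - ψ (u i 0))
            = ψ (u i (Fin.last p)) - ψ (u (i - 1) (Fin.last p)) := by intro i; ring
        rw [Finset.sum_congr rfl (fun i _ => this i), Finset.sum_sub_distrib]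
        have : ∑ i : ZMod N, ψ (u (i - 1) (Fin.last p))
            = ∑ i : ZMod N, ψ (u i (Fin.last p)) := by
          apply Fintype.sum_equiv (Equiv.subRight (1 : ZMod N))
          intro i; simp
        rw [this, sub_self]
end
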